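/- Let n ≥ 2 be an integer and a > 0, and set T(a) = sinh^{n−1}(a) · ∫_a^∞ (sinh^{2n−2}(u) − sinh^{2n−2}(a))^{−1/2} du. Then there exists a positive, twice differentiable function f on the interval (−T(a), T(a)) satisfying f''(t) = (n−1)·coth(f(t))·(1+f'(t)²) for all t, with f(0) = a, f'(0) = 0, and such that f(t) → +∞ as t → T(a)⁻. -/

import Mathlib

open MeasureTheory

/-- The half-height `T(a)` of the `n`-dimensional catenoid `C_a` in `ℍⁿ × ℝ`. -/
noncomputable def capT (n : ℕ) (a : ℝ) : ℝ :=
  Real.sinh a ^ (n - 1) *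
    ∫ u in Set.Ioi a, 1 / Real.sqrt (Real.sinh u ^ (2 * n - 2) - Real.sinh a ^ (2 * n - 2))

set_option maxHeartbeats 1000000

section Stmt4AuxSection
open MeasureTheory Set Filter Real Topology

noncomputable section
namespace Stmt4Aux

variable (n : ℕ) (a : ℝ)

def DD (y : ℝ) : ℝ := Real.sinh y ^ (2 * n - 2) - Real.sinh a ^ (2 * n - 2)
def ww (y : ℝ) : ℝ := 1 / Real.sqrt (DD n a y)
def GG (y : ℝ) : ℝ := Real.sinh a ^ (n - 1) * ∫ s in a..y, ww n a s
def hh (y : ℝ) : ℝ := Real.sqrt (DD n a y) / Real.sinh a ^ (n - 1)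
def capT' (n : ℕ) (a : ℝ) : ℝ := capT n a
open Classical in
def ffa (u : ℝ) : ℝ := if h : ∃ y, a ≤ y ∧ GG n a y = u then h.choose else a
def ff (t : ℝ) : ℝ := ffa n a |t|
def fd (t : ℝ) : ℝ := Real.sign t * hh n a (ff n a t)
def Psi (n : ℕ) (a : ℝ) (y : ℝ) : ℝ :=
  (2*n-2 : ℕ) * Real.sinh y ^ (2*n - 3) * Real.cosh y / (2 * Real.sqrt (DD n a y)) /
    Real.sinh a ^ (n - 1)

variable {n : ℕ} {a : ℝ}





lemma lam_pos (ha : 0 < a) : 0 < Real.sinh a ^ (n - 1) :=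
  pow_pos (Real.sinh_pos_iff.mpr ha) _

lemma DD_cont : Continuous (DD n a) := (Real.continuous_sinh.pow _).sub continuous_const

lemma DD_self : DD n a a = 0 := sub_self _

lemma DD_pos (hn : 2 ≤ n) (ha : 0 < a) {y : ℝ} (hy : a < y) : 0 < DD n a y := by
  have h1 : 0 < Real.sinh a := Real.sinh_pos_iff.mpr ha
  exact sub_pos.mpr (pow_lt_pow_left₀ (Real.sinh_lt_sinh.mpr hy) h1.le (by omega))

lemma DD_mono (ha : 0 < a) : MonotoneOn (DD n a) (Ici a) := by
  intro y hy z hz hyz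
  have h1 : 0 < Real.sinh a := Real.sinh_pos_iff.mpr ha
  have : 0 ≤ Real.sinh y := le_trans h1.le (Real.sinh_le_sinh.mpr hy)
  exact sub_le_sub_right (pow_le_pow_left₀ this (Real.sinh_le_sinh.mpr hyz) _) _

lemma ww_pos (hn : 2 ≤ n) (ha : 0 < a) {y : ℝ} (hy : a < y) : 0 < ww n a y :=
  one_div_pos.mpr (Real.sqrt_pos.mpr (DD_pos hn ha hy))

lemma ww_contAt (hn : 2 ≤ n) (ha : 0 < a) {y : ℝ} (hy : a < y) :
    ContinuousAt (ww n a) y := by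
  have : Real.sqrt (DD n a y) ≠ 0 := (Real.sqrt_pos.mpr (DD_pos hn ha hy)).ne'
  exact continuousAt_const.div ((Real.continuous_sqrt.comp DD_cont).continuousAt) this

lemma ww_contOn (hn : 2 ≤ n) (ha : 0 < a) {s : Set ℝ} (hs : s ⊆ Ioi a) :
    ContinuousOn (ww n a) s := fun y hy =>
  (ww_contAt hn ha (hs hy)).continuousWithinAt

/-- derivative of `DD` -/
lemma DD_hasDeriv (y : ℝ) : HasDerivAt (DD n a)
    ((2*n-2 : ℕ) * Real.sinh y ^ (2*n - 3) * Real.cosh y) y := by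
  have h := ((Real.hasDerivAt_sinh y).pow (2*n-2)).sub_const (Real.sinh a ^ (2*n-2))
  rw [show 2*n-2-1 = 2*n-3 by omega] at h
  exact h

/-- lower bound for `DD` via the mean value theorem -/
lemma DD_lower (hn : 2 ≤ n) (ha : 0 < a) {s : ℝ} (hs : a < s) :
    Real.sinh a ^ (2*n - 3) * (s - a) ≤ DD n a s := by
  have h1 : 0 < Real.sinh a := Real.sinh_pos_iff.mpr ha
  obtain ⟨c, hc, hceq⟩ := exists_hasDerivAt_eq_slope (DD n a)
    (fun y => (2*n-2 : ℕ) * Real.sinh y ^ (2*n - 3) * Real.cosh y) hs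
    (DD_cont.continuousOn) (fun x _ => DD_hasDeriv x)
  have hca : a < c := hc.1
  have hsinh : Real.sinh a ^ (2*n-3) ≤ Real.sinh c ^ (2*n-3) :=
    pow_le_pow_left₀ h1.le (Real.sinh_le_sinh.mpr hca.le) _
  have hcosh : (1:ℝ) ≤ Real.cosh c := Real.one_le_cosh c
  have hcast : (1:ℝ) ≤ (2*n-2 : ℕ) := by
    have : (2:ℕ) ≤ 2*n-2 := by omega
    exact_mod_cast le_trans (by norm_num) this
  have hD : DD n a s = (2*n-2 : ℕ) * Real.sinh c ^ (2*n - 3) * Real.cosh c * (s - a) := by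
    rw [hceq, DD_self, sub_zero, div_mul_cancel₀ _ (sub_pos.mpr hs).ne']
  rw [hD]
  have hpowpos : 0 < Real.sinh c ^ (2*n-3) := pow_pos (lt_of_lt_of_le h1 (Real.sinh_le_sinh.mpr hca.le)) _
  have hsa : 0 < s - a := sub_pos.mpr hs
  have key : Real.sinh a ^ (2*n-3) ≤ (2*n-2 : ℕ) * Real.sinh c ^ (2*n - 3) * Real.cosh c :=
    calc Real.sinh a ^ (2*n-3) ≤ Real.sinh c ^ (2*n-3) := hsinh
      _ = 1 * Real.sinh c ^ (2*n-3) * 1 := by ring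
      _ ≤ (2*n-2 : ℕ) * Real.sinh c ^ (2*n - 3) * Real.cosh c := by
          apply mul_le_mul (mul_le_mul hcast le_rfl hpowpos.le (le_trans zero_le_one hcast))
            hcosh zero_le_one
          exact mul_nonneg (le_trans zero_le_one hcast) hpowpos.le
  exact mul_le_mul_of_nonneg_right key hsa.le



lemma rpow_int (a : ℝ) : IntegrableOn (fun s : ℝ => (s - a) ^ (-(1:ℝ)/2)) (Ioc a (a+1)) := by
  have h := (intervalIntegral.intervalIntegrable_rpow' (a := 0) (b := 1) (r := -(1:ℝ)/2)
    (by norm_num)).comp_sub_right a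
  rw [intervalIntegrable_iff_integrableOn_Ioc_of_le (by linarith)] at h
  rw [zero_add, add_comm 1 a] at h
  exact h

lemma rpow_eq_sqrt {x : ℝ} (hx : 0 < x) : (x) ^ (-(1:ℝ)/2) = 1 / Real.sqrt x := by
  rw [Real.sqrt_eq_rpow, one_div, ← Real.rpow_neg hx.le]
  norm_num



lemma ww_int_Ioc (hn : 2 ≤ n) (ha : 0 < a) : IntegrableOn (ww n a) (Ioc a (a+1)) := by
  set c := Real.sinh a ^ (2*n-3) with hc
  have hcpos : 0 < c := pow_pos (Real.sinh_pos_iff.mpr ha) _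
  have hmeas : AEStronglyMeasurable (ww n a) (volume.restrict (Ioc a (a+1))) :=
    (ww_contOn hn ha Ioc_subset_Ioi_self).aestronglyMeasurable measurableSet_Ioc
  refine Integrable.mono' ((rpow_int a).const_mul (1/Real.sqrt c)) hmeas ?_
  filter_upwards [ae_restrict_mem measurableSet_Ioc] with s hs
  have hsa : a < s := hs.1
  have hD := DD_lower hn ha hsa
  have h1 : ‖ww n a s‖ = 1 / Real.sqrt (DD n a s) := by
    rw [Real.norm_eq_abs, abs_of_pos (ww_pos hn ha hsa)]; rfl
  rw [h1]
  have h2 : Real.sqrt (c * (s - a)) ≤ Real.sqrt (DD n a s) := Real.sqrt_le_sqrt hD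
  have h3 : 0 < Real.sqrt (c * (s-a)) :=
    Real.sqrt_pos.mpr (mul_pos hcpos (sub_pos.mpr hsa))
  calc 1 / Real.sqrt (DD n a s) ≤ 1 / Real.sqrt (c * (s-a)) := one_div_le_one_div_of_le h3 h2
    _ = 1/Real.sqrt c * ((s-a) ^ (-(1:ℝ)/2)) := by
        rw [Real.sqrt_mul hcpos.le, rpow_eq_sqrt (sub_pos.mpr hsa)]
        field_simp

lemma ww_int_Ioi' (hn : 2 ≤ n) (ha : 0 < a) : IntegrableOn (ww n a) (Ioi (a+1)) := by
  have hs1 : 0 < Real.sinh a := Real.sinh_pos_iff.mpr ha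
  have hs2 : Real.sinh a < Real.sinh (a+1) := Real.sinh_lt_sinh.mpr (by linarith)
  set r : ℝ := Real.sinh a / Real.sinh (a+1) with hrdef
  have hr0 : 0 < r := div_pos hs1 (lt_trans hs1 hs2)
  have hr1 : r < 1 := (div_lt_one (lt_trans hs1 hs2)).mpr hs2
  set K : ℝ := 1 - r^(2*n-2) with hK
  have hKpos : 0 < K := sub_pos.mpr (pow_lt_one₀ hr0.le hr1 (by omega))
  have hnn : 0 < ((n-1 : ℕ) : ℝ) := by
    have : 1 ≤ n - 1 := by omega
    exact_mod_cast Nat.lt_of_lt_of_le Nat.zero_lt_one this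
  have hmeas : AEStronglyMeasurable (ww n a) (volume.restrict (Ioi (a+1))) :=
    (ww_contOn hn ha (fun y hy => lt_trans (by linarith) hy)).aestronglyMeasurable
      measurableSet_Ioi
  refine Integrable.mono'
    (((exp_neg_integrableOn_Ioi (a+1) hnn)).const_mul ((1/Real.sqrt K) * 4^(n-1))) hmeas ?_
  filter_upwards [ae_restrict_mem measurableSet_Ioi] with s hs
  have hsa : a < s := by have := mem_Ioi.mp hs; linarith
  have hsinh_s : 0 < Real.sinh s := lt_trans hs1 (Real.sinh_lt_sinh.mpr hsa)
  -- sinh a ^ p ≤ r^p * sinh s ^ p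
  have hra : Real.sinh a = r * Real.sinh (a+1) := by
    rw [hrdef, div_mul_cancel₀ _ (lt_trans hs1 hs2).ne']
  have h4 : Real.sinh a ≤ r * Real.sinh s := by
    rw [hra]
    exact mul_le_mul_of_nonneg_left (Real.sinh_le_sinh.mpr (le_of_lt (mem_Ioi.mp hs))) hr0.le
  have h5 : Real.sinh a ^ (2*n-2) ≤ (r * Real.sinh s) ^ (2*n-2) :=
    pow_le_pow_left₀ hs1.le h4 _
  have h6 : K * Real.sinh s ^ (2*n-2) ≤ DD n a s := by
    have : (r * Real.sinh s)^(2*n-2) = r^(2*n-2) * Real.sinh s^(2*n-2) := mul_pow _ _ _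
    simp only [DD, hK]
    nlinarith [pow_pos hsinh_s (2*n-2)]
  -- sqrt lower bound
  have hsq : Real.sqrt (DD n a s) ≥ Real.sqrt K * Real.sinh s ^ (n-1) := by
    have h7 : Real.sinh s ^ (2*n-2) = (Real.sinh s ^ (n-1))^2 := by
      rw [← pow_mul]; congr 1; omega
    calc Real.sqrt (DD n a s) ≥ Real.sqrt (K * Real.sinh s ^ (2*n-2)) := Real.sqrt_le_sqrt h6
      _ = Real.sqrt K * Real.sinh s ^ (n-1) := by
          rw [Real.sqrt_mul hKpos.le, h7, Real.sqrt_sq (pow_nonneg hsinh_s.le _)]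
  -- sinh s ≥ exp s / 4
  have hs1' : (1:ℝ) ≤ s := by linarith [mem_Ioi.mp hs]
  have hexp2 : (2:ℝ) ≤ Real.exp s := by
    calc (2:ℝ) ≤ Real.exp 1 := by linarith [Real.add_one_le_exp 1]
      _ ≤ Real.exp s := Real.exp_le_exp.mpr hs1'
  have hsinh_lb : Real.exp s / 4 ≤ Real.sinh s := by
    rw [Real.sinh_eq]
    have hinv : Real.exp (-s) * Real.exp s = 1 := by
      rw [← Real.exp_add]; simp
    nlinarith [Real.exp_pos s, Real.exp_pos (-s)]
  -- assemble
  have hsinhpow : (Real.exp s / 4) ^ (n-1) ≤ Real.sinh s ^ (n-1) :=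
    pow_le_pow_left₀ (by positivity) hsinh_lb _
  have hfinal : ‖ww n a s‖ ≤ 1/Real.sqrt K * 4^(n-1) * Real.exp (-(((n-1:ℕ)):ℝ) * s) := by
    have hwpos := ww_pos hn ha hsa
    rw [Real.norm_eq_abs, abs_of_pos hwpos]
    have hden_pos : 0 < Real.sqrt K * (Real.exp s / 4) ^ (n-1) := by positivity
    have hden : Real.sqrt K * (Real.exp s / 4) ^ (n-1) ≤ Real.sqrt (DD n a s) := by
      calc Real.sqrt K * (Real.exp s / 4) ^ (n-1) ≤ Real.sqrt K * Real.sinh s ^ (n-1) :=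
            mul_le_mul_of_nonneg_left hsinhpow (Real.sqrt_nonneg _)
        _ ≤ Real.sqrt (DD n a s) := hsq
    calc ww n a s = 1 / Real.sqrt (DD n a s) := rfl
      _ ≤ 1 / (Real.sqrt K * (Real.exp s / 4) ^ (n-1)) :=
          one_div_le_one_div_of_le hden_pos hden
      _ = 1/Real.sqrt K * 4^(n-1) * Real.exp (-(((n-1:ℕ)):ℝ) * s) := by
          rw [neg_mul, Real.exp_neg, Real.exp_nat_mul, div_pow]
          have h4 : (0:ℝ) < Real.exp s ^ (n-1) := by positivity
          have hKs : (0:ℝ) < Real.sqrt K := Real.sqrt_pos.mpr hKpos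
          field_simp
  exact hfinal

lemma ww_int_Ioi (hn : 2 ≤ n) (ha : 0 < a) : IntegrableOn (ww n a) (Ioi a) := by
  rw [← Ioc_union_Ioi_eq_Ioi (le_of_lt (lt_add_one a))]
  exact (ww_int_Ioc hn ha).union (ww_int_Ioi' hn ha)




lemma ww_ii (hn : 2 ≤ n) (ha : 0 < a) {y z : ℝ} (hy : a ≤ y) (hz : a ≤ z) :
    IntervalIntegrable (ww n a) volume y z := by
  apply IntegrableOn.intervalIntegrable
  have h : IntegrableOn (ww n a) (Icc a (max y z)) := by
    rw [integrableOn_Icc_iff_integrableOn_Ioc]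
    exact (ww_int_Ioi hn ha).mono_set Ioc_subset_Ioi_self
  exact h.mono_set (Set.uIcc_subset_Icc (⟨hy, le_max_left _ _⟩) ⟨hz, le_max_right _ _⟩)

lemma GG_self : GG n a a = 0 := by simp [GG]

lemma GG_hasDeriv (hn : 2 ≤ n) (ha : 0 < a) {y : ℝ} (hy : a < y) :
    HasDerivAt (GG n a) (Real.sinh a ^ (n-1) * ww n a y) y := by
  have hsm : StronglyMeasurableAtFilter (ww n a) (𝓝 y) volume :=
    ContinuousOn.stronglyMeasurableAtFilter isOpen_Ioi
      (ww_contOn hn ha le_rfl) y hy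
  exact (intervalIntegral.integral_hasDerivAt_right (ww_ii hn ha le_rfl hy.le) hsm
    (ww_contAt hn ha hy)).const_mul _

lemma GG_strictMonoOn (hn : 2 ≤ n) (ha : 0 < a) : StrictMonoOn (GG n a) (Ici a) := by
  intro y hy z hz hyz
  have hint : 0 < ∫ s in y..z, ww n a s :=
    intervalIntegral.intervalIntegral_pos_of_pos_on (ww_ii hn ha hy hz)
      (fun x hx => ww_pos hn ha (lt_of_le_of_lt hy hx.1)) hyz
  have hadd : (∫ s in a..y, ww n a s) + ∫ s in y..z, ww n a s = ∫ s in a..z, ww n a s :=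
    intervalIntegral.integral_add_adjacent_intervals (ww_ii hn ha le_rfl hy)
      (ww_ii hn ha hy hz)
  have hl := lam_pos (n := n) ha
  simp only [GG]
  nlinarith

lemma GG_contOn (hn : 2 ≤ n) (ha : 0 < a) (b : ℝ) : ContinuousOn (GG n a) (Icc a b) := by
  rcases le_or_gt a b with hab | hab
  · have h : IntegrableOn (ww n a) (Icc a b) := by
      rw [integrableOn_Icc_iff_integrableOn_Ioc]
      exact (ww_int_Ioi hn ha).mono_set Ioc_subset_Ioi_self
    have h2 := (intervalIntegral.continuousOn_primitive (f := ww n a) (μ := volume) h).const_smul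
      (Real.sinh a ^ (n-1))
    apply (h2.congr)
    intro x hx
    simp only [GG, intervalIntegral.integral_of_le hx.1, Pi.smul_apply, smul_eq_mul]
  · rw [Icc_eq_empty (not_le.mpr hab)]; exact continuousOn_empty _

lemma GG_tendsto (hn : 2 ≤ n) (ha : 0 < a) : Tendsto (GG n a) atTop (𝓝 (capT' n a)) := by
  have h := MeasureTheory.intervalIntegral_tendsto_integral_Ioi a (ww_int_Ioi hn ha)
    (tendsto_id (α := ℝ))
  have : capT' n a = Real.sinh a ^ (n-1) * ∫ u in Set.Ioi a, ww n a u := rfl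
  rw [this]
  exact h.const_mul _

lemma GG_mono (hn : 2 ≤ n) (ha : 0 < a) : MonotoneOn (GG n a) (Ici a) :=
  (GG_strictMonoOn hn ha).monotoneOn

lemma GG_le_T (hn : 2 ≤ n) (ha : 0 < a) {y : ℝ} (hy : a ≤ y) : GG n a y ≤ capT' n a := by
  apply ge_of_tendsto (GG_tendsto hn ha)
  filter_upwards [eventually_ge_atTop y] with z hz
  exact GG_mono hn ha hy (le_trans hy hz) hz

lemma GG_lt_T (hn : 2 ≤ n) (ha : 0 < a) {y : ℝ} (hy : a ≤ y) : GG n a y < capT' n a :=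
  lt_of_lt_of_le
    (GG_strictMonoOn hn ha hy (le_trans hy (by linarith)) (by linarith))
    (GG_le_T hn ha (le_trans hy (by linarith : y ≤ y + 1)))

lemma T_pos (hn : 2 ≤ n) (ha : 0 < a) : 0 < capT' n a := by
  have := GG_lt_T hn ha (le_refl a)
  rwa [GG_self] at this

lemma GG_surj (hn : 2 ≤ n) (ha : 0 < a) {t : ℝ} (ht : 0 ≤ t) (ht2 : t < capT' n a) :
    ∃ y, a ≤ y ∧ GG n a y = t := by
  obtain ⟨M, hM1, hM2⟩ : ∃ M, a ≤ M ∧ t ≤ GG n a M := by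
    have h1 := (GG_tendsto hn ha).eventually_const_lt ht2
    obtain ⟨M, hM⟩ := (h1.and (eventually_ge_atTop a)).exists
    exact ⟨M, hM.2, hM.1.le⟩
  have := intermediate_value_Icc hM1 (GG_contOn hn ha M)
  have hmem : t ∈ Icc (GG n a a) (GG n a M) := by
    rw [GG_self]; exact ⟨ht, hM2⟩
  obtain ⟨y, hy, hyt⟩ := this hmem
  exact ⟨y, hy.1, hyt⟩



section hh
lemma hh_self : hh n a a = 0 := by simp [hh, DD_self]
lemma hh_cont : Continuous (hh n a) := (Real.continuous_sqrt.comp DD_cont).div_const _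
lemma hh_nonneg (ha : 0 < a) (y : ℝ) : 0 ≤ hh n a y :=
  div_nonneg (Real.sqrt_nonneg _) (lam_pos ha).le
lemma hh_pos (hn : 2 ≤ n) (ha : 0 < a) {y : ℝ} (hy : a < y) : 0 < hh n a y :=
  div_pos (Real.sqrt_pos.mpr (DD_pos hn ha hy)) (lam_pos ha)
lemma hh_mono (ha : 0 < a) : MonotoneOn (hh n a) (Ici a) := fun y hy z hz hyz => by
  have hl := lam_pos (n := n) ha
  unfold hh
  gcongr
  exact DD_mono ha hy hz hyz
end hh

section ffsec
variable (hn : 2 ≤ n) (ha : 0 < a)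
include hn ha

lemma ff_spec {t : ℝ} (ht : |t| < capT' n a) :
    a ≤ ff n a t ∧ GG n a (ff n a t) = |t| := by
  have hex := GG_surj hn ha (abs_nonneg t) ht
  rw [ff, ffa, dif_pos hex]
  exact hex.choose_spec

omit hn ha in
lemma ff_even (t : ℝ) : ff n a (-t) = ff n a t := by rw [ff, ff, abs_neg]

lemma ff_lt_of {s : ℝ} (hsT : |s| < capT' n a) {z : ℝ} (hz : a ≤ z)
    (h : |s| < GG n a z) : ff n a s < z := by
  by_contra h'
  push_neg at h'
  have := GG_mono hn ha hz (le_trans hz h') h'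
  rw [(ff_spec hn ha hsT).2] at this
  linarith

lemma lt_ff_of {s : ℝ} (hsT : |s| < capT' n a) {z : ℝ} (hz : a ≤ z)
    (h : GG n a z < |s|) : z < ff n a s := by
  by_contra h'
  push_neg at h'
  have := GG_mono hn ha (ff_spec hn ha hsT).1 hz h'
  rw [(ff_spec hn ha hsT).2] at this
  linarith

lemma ff_zero : ff n a 0 = a := by
  have h0 : |(0:ℝ)| < capT' n a := by rw [abs_zero]; exact T_pos hn ha
  have h := ff_spec hn ha h0
  rw [abs_zero] at h
  refine ((GG_strictMonoOn hn ha).injOn h.1 (self_mem_Ici) ?_)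
  rw [h.2, GG_self]

lemma a_lt_ff {t : ℝ} (ht0 : t ≠ 0) (ht : |t| < capT' n a) : a < ff n a t := by
  apply lt_ff_of hn ha ht le_rfl
  rw [GG_self]
  exact abs_pos.mpr ht0

lemma ff_contAt_nonneg {t : ℝ} (ht0 : 0 ≤ t) (htT : t < capT' n a) :
    ContinuousAt (ff n a) t := by
  rw [Metric.continuousAt_iff]
  intro ε hε
  set y := ff n a t with hy
  have habs : |t| = t := abs_of_nonneg ht0
  have hspec := ff_spec hn ha (by rwa [habs])
  have hya : a ≤ y := hspec.1
  have hGy : GG n a y = t := by rw [hspec.2, habs]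
  have hyε : a ≤ y + ε := by linarith
  have hupper : t < GG n a (y + ε) := by
    rw [← hGy]; exact GG_strictMonoOn hn ha hya hyε (by linarith)
  have hTup : GG n a (y + ε) < capT' n a := GG_lt_T hn ha hyε
  by_cases hcase : a ≤ y - ε
  · have hlow : GG n a (y - ε) < t := by
      rw [← hGy]; exact GG_strictMonoOn hn ha hcase hya (by linarith)
    refine ⟨min (GG n a (y + ε) - t) (t - GG n a (y - ε)), lt_min (by linarith) (by linarith),
      fun {s} hs => ?_⟩
    rw [Real.dist_eq] at hs ⊢
    have hs1 : |s - t| < GG n a (y + ε) - t := lt_of_lt_of_le hs (min_le_left _ _)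
    have hs2 : |s - t| < t - GG n a (y - ε) := lt_of_lt_of_le hs (min_le_right _ _)
    have habs_s : |s| < GG n a (y + ε) := by
      calc |s| = |t + (s - t)| := by congr 1; ring
        _ ≤ |t| + |s - t| := abs_add_le _ _
        _ < GG n a (y + ε) := by rw [habs]; linarith
    have hsT : |s| < capT' n a := lt_trans habs_s hTup
    have hub := ff_lt_of hn ha hsT hyε habs_s
    have hlb : y - ε < ff n a s := by
      apply lt_ff_of hn ha hsT hcase
      have : t - |s - t| ≤ |s| := by
        have h1 : t = |t| := habs.symm
        have := abs_sub_abs_le_abs_sub t s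
        rw [abs_sub_comm] at this
        linarith [le_abs_self t, neg_abs_le t, abs_nonneg s]
      linarith
    rw [abs_lt]
    constructor <;> [linarith; linarith]
  · push_neg at hcase
    refine ⟨GG n a (y + ε) - t, by linarith, fun {s} hs => ?_⟩
    rw [Real.dist_eq] at hs ⊢
    have habs_s : |s| < GG n a (y + ε) := by
      calc |s| = |t + (s - t)| := by congr 1; ring
        _ ≤ |t| + |s - t| := abs_add_le _ _
        _ < GG n a (y + ε) := by rw [habs]; linarith
    have hsT : |s| < capT' n a := lt_trans habs_s hTup
    have hub := ff_lt_of hn ha hsT hyε habs_s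
    have hlb : y - ε < ff n a s := lt_of_lt_of_le hcase (ff_spec hn ha hsT).1
    rw [abs_lt]
    constructor <;> [linarith; linarith]

lemma ff_contAt {t : ℝ} (ht : t ∈ Ioo (-(capT' n a)) (capT' n a)) :
    ContinuousAt (ff n a) t := by
  rcases le_or_gt 0 t with h0 | h0
  · exact ff_contAt_nonneg hn ha h0 ht.2
  · have hneg : ContinuousAt (ff n a) (-t) :=
      ff_contAt_nonneg hn ha (by linarith) (by linarith [ht.1])
    have : ff n a = (ff n a) ∘ (fun s => -s) := by
      funext s; simp [Function.comp, ff_even]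
    rw [this]
    exact ContinuousAt.comp hneg (continuous_neg.continuousAt)

end ffsec



lemma hh_hasDerivAt (hn : 2 ≤ n) (ha : 0 < a) {y : ℝ} (hy : a < y) :
    HasDerivAt (hh n a) (Psi n a y) y :=
  (((DD_hasDeriv y).sqrt (DD_pos hn ha hy).ne').div_const _)

lemma prod_identity (hn : 2 ≤ n) (ha : 0 < a) {y : ℝ} (hy : a < y) :
    Psi n a y * hh n a y
      = ((n:ℝ) - 1) * (Real.cosh y / Real.sinh y) * (1 + hh n a y ^ 2) := by
  have hsa : 0 < Real.sinh a := Real.sinh_pos_iff.mpr ha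
  have hsy : 0 < Real.sinh y := lt_trans hsa (Real.sinh_lt_sinh.mpr hy)
  have hDpos := DD_pos hn ha hy
  have hL : 0 < Real.sinh a ^ (n-1) := lam_pos ha
  have hS : 0 < Real.sqrt (DD n a y) := Real.sqrt_pos.mpr hDpos
  have hS2 : Real.sqrt (DD n a y) ^ 2 = DD n a y := Real.sq_sqrt hDpos.le
  have hL2 : (Real.sinh a ^ (n-1)) ^ 2 = Real.sinh a ^ (2*n-2) := by
    rw [← pow_mul]; congr 1; omega
  have hpows : Real.sinh y ^ (2*n-2) = Real.sinh y ^ (2*n-3) * Real.sinh y := by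
    rw [← pow_succ]; congr 1; omega
  have hcast : ((2*n-2 : ℕ) : ℝ) = 2 * (n:ℝ) - 2 := by
    have h2n : (2:ℕ) ≤ 2*n := by omega
    push_cast [Nat.cast_sub h2n]
    ring
  have hDD : DD n a y = Real.sinh y ^ (2*n-2) - Real.sinh a ^ (2*n-2) := rfl
  unfold Psi hh
  rw [hcast]
  rw [div_pow, hS2, hL2]
  have hLL : Real.sinh a ^ (n-1) * Real.sinh a ^ (n-1) = Real.sinh a ^ (2*n-2) := by
    rw [← sq, hL2]
  have e2 : Real.sinh y ^ (2*n-3) * Real.sinh y = Real.sinh a ^ (2*n-2) + DD n a y := by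
    rw [hDD, ← hpows]; ring
  field_simp
  linear_combination ((n:ℝ)-1) * Real.sinh a ^ (2*n-2) * e2 -
    ((n:ℝ)-1) * (Real.sinh a ^ (2*n-2) + DD n a y) * hL2


section derivsec
variable (hn : 2 ≤ n) (ha : 0 < a)
include hn ha

lemma inv_lam_ww {y : ℝ} (hy : a < y) :
    (Real.sinh a ^ (n-1) * ww n a y)⁻¹ = hh n a y := by
  have h1 := (lam_pos (n := n) ha).ne'
  have h2 := (Real.sqrt_pos.mpr (DD_pos hn ha hy)).ne'
  rw [ww, hh]
  field_simp

lemma ff_hasDeriv_pos {t : ℝ} (ht : t ∈ Ioo 0 (capT' n a)) :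
    HasDerivAt (ff n a) (hh n a (ff n a t)) t := by
  have habs : |t| < capT' n a := by
    rw [abs_of_pos ht.1]; exact ht.2
  have hfa : a < ff n a t := a_lt_ff hn ha (ne_of_gt ht.1) habs
  have hcont : ContinuousAt (ff n a) t :=
    ff_contAt hn ha ⟨by linarith [T_pos hn ha, ht.1], ht.2⟩
  have hfg : ∀ᶠ s in 𝓝 t, GG n a (ff n a s) = s := by
    filter_upwards [isOpen_Ioo.mem_nhds ht] with s hs
    have : |s| < capT' n a := by rw [abs_of_pos hs.1]; exact hs.2
    rw [(ff_spec hn ha this).2, abs_of_pos hs.1]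
  have hne : Real.sinh a ^ (n-1) * ww n a (ff n a t) ≠ 0 :=
    (mul_pos (lam_pos ha) (ww_pos hn ha hfa)).ne'
  have h := HasDerivAt.of_local_left_inverse hcont (GG_hasDeriv hn ha hfa) hne hfg
  rwa [inv_lam_ww hn ha hfa] at h

lemma ff_eq_comp_neg : ff n a = (ff n a) ∘ (fun s : ℝ => -s) := by
  funext s; simp only [Function.comp]; rw [ff_even]

lemma ff_hasDeriv_neg {t : ℝ} (ht : t ∈ Ioo (-(capT' n a)) 0) :
    HasDerivAt (ff n a) (-(hh n a (ff n a t))) t := by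
  have htpos : -t ∈ Ioo 0 (capT' n a) := ⟨by linarith [ht.2], by linarith [ht.1]⟩
  have h1 := ff_hasDeriv_pos hn ha htpos
  have h2 : HasDerivAt (fun s : ℝ => -s) (-1 : ℝ) t := (hasDerivAt_neg t)
  have h3 := HasDerivAt.comp t h1 h2
  rw [← ff_eq_comp_neg hn ha] at h3
  rw [ff_even] at h3
  rw [mul_neg_one] at h3
  exact h3

lemma sinh_ff_pos {t : ℝ} (ht : |t| < capT' n a) : 0 < Real.sinh (ff n a t) := by
  have h1 : 0 < a := ha
  have h2 : a ≤ ff n a t := (ff_spec hn ha ht).1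
  exact Real.sinh_pos_iff.mpr (by linarith)

lemma fd_hasDeriv_pos {t : ℝ} (ht : t ∈ Ioo 0 (capT' n a)) :
    HasDerivAt (fd n a)
      (((n:ℝ) - 1) * (Real.cosh (ff n a t) / Real.sinh (ff n a t)) * (1 + fd n a t ^ 2)) t := by
  have habs : |t| < capT' n a := by rw [abs_of_pos ht.1]; exact ht.2
  have hfa : a < ff n a t := a_lt_ff hn ha (ne_of_gt ht.1) habs
  have hEq : fd n a =ᶠ[𝓝 t] fun s => hh n a (ff n a s) := by
    filter_upwards [isOpen_Ioi.mem_nhds (mem_Ioi.mpr ht.1)] with s hs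
    rw [fd, Real.sign_of_pos hs, one_mul]
  have h1 : HasDerivAt (fun s => hh n a (ff n a s))
      (Psi n a (ff n a t) * hh n a (ff n a t)) t :=
    HasDerivAt.comp t (hh_hasDerivAt hn ha hfa) (ff_hasDeriv_pos hn ha ht)
  have h2 := h1.congr_of_eventuallyEq hEq
  rw [prod_identity hn ha hfa] at h2
  have hfd : fd n a t = hh n a (ff n a t) := by
    rw [fd, Real.sign_of_pos ht.1, one_mul]
  rwa [← hfd] at h2

lemma fd_hasDeriv_neg {t : ℝ} (ht : t ∈ Ioo (-(capT' n a)) 0) :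
    HasDerivAt (fd n a)
      (((n:ℝ) - 1) * (Real.cosh (ff n a t) / Real.sinh (ff n a t)) * (1 + fd n a t ^ 2)) t := by
  have habs : |t| < capT' n a := by rw [abs_of_neg ht.2]; linarith [ht.1]
  have hfa : a < ff n a t := a_lt_ff hn ha (ne_of_lt ht.2) habs
  have hEq : fd n a =ᶠ[𝓝 t] fun s => -(hh n a (ff n a s)) := by
    filter_upwards [isOpen_Iio.mem_nhds (mem_Iio.mpr ht.2)] with s hs
    rw [fd, Real.sign_of_neg hs]
    ring
  have h1 : HasDerivAt (fun s => hh n a (ff n a s))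
      (Psi n a (ff n a t) * -(hh n a (ff n a t))) t := by
    exact HasDerivAt.comp t (hh_hasDerivAt hn ha hfa) (ff_hasDeriv_neg hn ha ht)
  have h2 : HasDerivAt (fun s => -(hh n a (ff n a s)))
      (Psi n a (ff n a t) * hh n a (ff n a t)) t := by
    have := h1.neg
    rw [mul_neg, neg_neg] at this
    exact this
  have h3 := h2.congr_of_eventuallyEq hEq
  rw [prod_identity hn ha hfa] at h3
  have hfd : fd n a t ^ 2 = hh n a (ff n a t) ^ 2 := by
    rw [fd, Real.sign_of_neg ht.2]
    ring
  rwa [← hfd] at h3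

end derivsec


lemma ff_abs (t : ℝ) : ff n a |t| = ff n a t := by rw [ff, ff, abs_abs]

section zerosec
variable (hn : 2 ≤ n) (ha : 0 < a)
include hn ha

lemma ff_lt_ff {s t : ℝ} (hs : 0 ≤ s) (hst : s < t) (ht : t < capT' n a) :
    ff n a s < ff n a t := by
  have hsT : |s| < capT' n a := by rw [abs_of_nonneg hs]; linarith
  have htT : |t| < capT' n a := by rw [abs_of_nonneg (by linarith)]; exact ht
  apply lt_ff_of hn ha htT (ff_spec hn ha hsT).1
  rw [(ff_spec hn ha hsT).2, abs_of_nonneg hs, abs_of_nonneg (by linarith : (0:ℝ) ≤ t)]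
  exact hst

lemma ff_contOn_Icc {u : ℝ} (hu : u ∈ Ioo 0 (capT' n a)) :
    ContinuousOn (ff n a) (Icc 0 u) := by
  intro x hx
  have : x ∈ Ioo (-(capT' n a)) (capT' n a) :=
    ⟨by linarith [hx.1, T_pos hn ha], by linarith [hx.2, hu.2]⟩
  exact (ff_contAt hn ha this).continuousWithinAt

lemma slope_ff_bound_pos {s : ℝ} (hs : s ∈ Ioo 0 (capT' n a)) :
    |ff n a s - a| / s ≤ hh n a (ff n a s) := by
  obtain ⟨c, hc, hceq⟩ := exists_hasDerivAt_eq_slope (ff n a) (fun x => hh n a (ff n a x))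
    hs.1 (ff_contOn_Icc hn ha hs) (fun x hx => ff_hasDeriv_pos hn ha ⟨hx.1, lt_trans hx.2 hs.2⟩)
  have hcT : c < capT' n a := lt_trans hc.2 hs.2
  have hc0 : (0:ℝ) ≤ c := hc.1.le
  have hcmem : a ≤ ff n a c := (ff_spec hn ha (by rw [abs_of_nonneg hc0]; exact hcT)).1
  have hsmem : a ≤ ff n a s :=
    (ff_spec hn ha (by rw [abs_of_nonneg hs.1.le]; exact hs.2)).1
  have hmono : hh n a (ff n a c) ≤ hh n a (ff n a s) :=
    hh_mono ha hcmem hsmem (ff_lt_ff hn ha hc0 hc.2 hs.2).le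
  rw [ff_zero hn ha, sub_zero] at hceq
  have hfsa : a ≤ ff n a s := hsmem
  have : |ff n a s - a| / s = hh n a (ff n a c) := by
    rw [abs_of_nonneg (by linarith), hceq]
  rw [this]
  exact hmono

lemma hasDerivAt_ff_zero : HasDerivAt (ff n a) 0 0 := by
  rw [hasDerivAt_iff_tendsto_slope]
  apply squeeze_zero_norm' (a := fun s => hh n a (ff n a s))
  · have hmem : Ioo (-(capT' n a)) (capT' n a) ∈ 𝓝 (0:ℝ) :=
      isOpen_Ioo.mem_nhds ⟨by linarith [T_pos hn ha], T_pos hn ha⟩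
    filter_upwards [self_mem_nhdsWithin, eventually_nhdsWithin_of_eventually_nhds
      (eventually_of_mem hmem (fun s hs => hs))] with s hs0 hs
    have hs0' : s ≠ 0 := hs0
    have hslope : slope (ff n a) 0 s = (ff n a s - a) / s := by
      rw [slope_def_field, ff_zero hn ha, sub_zero]
    rw [hslope, Real.norm_eq_abs, abs_div]
    rcases lt_or_gt_of_ne hs0' with hneg | hpos
    · have hs' : -s ∈ Ioo 0 (capT' n a) := ⟨by linarith, by linarith [hs.1]⟩
      have := slope_ff_bound_pos hn ha hs'
      rw [ff_even] at this
      rw [abs_of_neg hneg]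
      exact this
    · have := slope_ff_bound_pos hn ha ⟨hpos, hs.2⟩
      rwa [abs_of_pos hpos]
  · have hcont : ContinuousAt (fun s => hh n a (ff n a s)) 0 :=
      hh_cont.continuousAt.comp (ff_contAt hn ha ⟨by linarith [T_pos hn ha], T_pos hn ha⟩)
    have h0 : hh n a (ff n a 0) = 0 := by rw [ff_zero hn ha, hh_self]
    have := hcont.tendsto
    rw [h0] at this
    exact this.mono_left nhdsWithin_le_nhds

lemma fd_zero_eq : fd n a 0 = 0 := by rw [fd, Real.sign_zero, zero_mul]

lemma fd_eq_pos {s : ℝ} (hs : 0 < s) : fd n a s = hh n a (ff n a s) := by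
  rw [fd, Real.sign_of_pos hs, one_mul]

lemma fd_eq_neg {s : ℝ} (hs : s < 0) : fd n a s = -(hh n a (ff n a s)) := by
  rw [fd, Real.sign_of_neg hs]; ring

lemma fd_contOn_Icc {u : ℝ} (hu : u ∈ Ioo 0 (capT' n a)) :
    ContinuousOn (fd n a) (Icc 0 u) := by
  intro x hx
  rcases eq_or_lt_of_le hx.1 with h0 | h0
  · subst h0
    have hcont : ContinuousAt (fun s => hh n a (ff n a s)) 0 :=
      hh_cont.continuousAt.comp (ff_contAt hn ha ⟨by linarith [T_pos hn ha], T_pos hn ha⟩)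
    apply (hcont.continuousWithinAt).congr
    · intro y hy
      rcases eq_or_lt_of_le hy.1 with h1 | h1
      · rw [← h1, fd_zero_eq hn ha, ff_zero hn ha, hh_self]
      · rw [fd_eq_pos hn ha h1]
    · rw [fd_zero_eq hn ha, ff_zero hn ha, hh_self]
  · exact ((fd_hasDeriv_pos hn ha ⟨h0, lt_of_le_of_lt hx.2 hu.2⟩).continuousAt).continuousWithinAt

lemma coth_antitone {x z : ℝ} (hx : 0 < x) (hxz : x ≤ z) :
    Real.cosh z / Real.sinh z ≤ Real.cosh x / Real.sinh x := by
  have hsx : 0 < Real.sinh x := Real.sinh_pos_iff.mpr hx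
  have hsz : 0 < Real.sinh z := Real.sinh_pos_iff.mpr (by linarith)
  rw [div_le_div_iff₀ hsz hsx]
  have h1 : 0 ≤ Real.sinh (z - x) := by
    rw [← Real.sinh_zero]
    exact Real.sinh_le_sinh.mpr (by linarith)
  rw [Real.sinh_sub] at h1
  nlinarith

lemma coth_pos {x : ℝ} (hx : 0 < x) : 0 < Real.cosh x / Real.sinh x :=
  div_pos (Real.cosh_pos x) (Real.sinh_pos_iff.mpr hx)

lemma slope_fd_bounds {s : ℝ} (hs0 : s ≠ 0) (hsT : |s| < capT' n a) :
    ((n:ℝ) - 1) * (Real.cosh (ff n a s) / Real.sinh (ff n a s)) ≤ fd n a s / s ∧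
    fd n a s / s ≤ ((n:ℝ) - 1) * (Real.cosh a / Real.sinh a) * (1 + hh n a (ff n a s) ^ 2) := by
  set u := |s| with hu
  have hu0 : 0 < u := abs_pos.mpr hs0
  have huT : u < capT' n a := hsT
  -- slope is even
  have hffu : ff n a u = ff n a s := ff_abs s
  have hslope : fd n a s / s = hh n a (ff n a s) / u := by
    rcases lt_or_gt_of_ne hs0 with hneg | hpos
    · rw [fd_eq_neg hn ha hneg, hu, abs_of_neg hneg, div_neg, neg_div]
    · rw [fd_eq_pos hn ha hpos, hu, abs_of_pos hpos]
  -- MVT on [0, u]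
  obtain ⟨c, hc, hceq⟩ := exists_hasDerivAt_eq_slope (fd n a)
    (fun x => ((n:ℝ) - 1) * (Real.cosh (ff n a x) / Real.sinh (ff n a x)) * (1 + fd n a x ^ 2))
    hu0 (fd_contOn_Icc hn ha ⟨hu0, huT⟩)
    (fun x hx => fd_hasDeriv_pos hn ha ⟨hx.1, lt_trans hx.2 huT⟩)
  have hcabs : |c| < capT' n a := by rw [abs_of_pos hc.1]; exact lt_trans hc.2 huT
  have hceq' : fd n a s / s
      = ((n:ℝ) - 1) * (Real.cosh (ff n a c) / Real.sinh (ff n a c)) * (1 + fd n a c ^ 2) := by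
    rw [fd_zero_eq hn ha, sub_zero, sub_zero, fd_eq_pos hn ha hu0] at hceq
    rw [hslope, ← hffu, ← hceq]
  -- facts
  have hA : (1:ℝ) ≤ (n:ℝ) - 1 := by
    have : (2:ℝ) ≤ (n:ℝ) := by exact_mod_cast hn
    linarith
  have hafc : a ≤ ff n a c := (ff_spec hn ha hcabs).1
  have hafs : a ≤ ff n a s := by
    rw [← hffu]
    exact (ff_spec hn ha (by rwa [abs_abs] : |u| < capT' n a)).1
  have hfcfs : ff n a c ≤ ff n a s := by
    rw [← hffu]
    exact (ff_lt_ff hn ha hc.1.le hc.2 huT).le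
  have hpos_fc : 0 < ff n a c := by linarith
  have hcoth1 : Real.cosh (ff n a s) / Real.sinh (ff n a s)
      ≤ Real.cosh (ff n a c) / Real.sinh (ff n a c) := coth_antitone hn ha hpos_fc hfcfs
  have hcoth2 : Real.cosh (ff n a c) / Real.sinh (ff n a c)
      ≤ Real.cosh a / Real.sinh a := coth_antitone hn ha ha hafc
  have hcothpos : 0 < Real.cosh (ff n a s) / Real.sinh (ff n a s) := coth_pos hn ha (by linarith)
  have hfdc : fd n a c = hh n a (ff n a c) := fd_eq_pos hn ha hc.1
  have hfdc_nonneg : 0 ≤ fd n a c := by rw [hfdc]; exact hh_nonneg ha _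
  have hfdc_le : fd n a c ≤ hh n a (ff n a s) := by
    rw [hfdc]
    exact hh_mono ha hafc hafs hfcfs
  have hsq : fd n a c ^ 2 ≤ hh n a (ff n a s) ^ 2 :=
    pow_le_pow_left₀ hfdc_nonneg hfdc_le 2
  set A : ℝ := (n:ℝ) - 1 with hAdef
  set c1 : ℝ := Real.cosh (ff n a s) / Real.sinh (ff n a s) with hc1
  set c2 : ℝ := Real.cosh (ff n a c) / Real.sinh (ff n a c) with hc2
  set c3 : ℝ := Real.cosh a / Real.sinh a with hc3
  have hA0 : (0:ℝ) ≤ A := by linarith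
  have hc2pos : 0 < c2 := lt_of_lt_of_le hcothpos hcoth1
  have hc3pos : 0 < c3 := lt_of_lt_of_le hc2pos hcoth2
  have h1 : 0 ≤ A * (c2 - c1) := mul_nonneg hA0 (by linarith)
  have h2 : 0 ≤ A * c2 * fd n a c ^ 2 :=
    mul_nonneg (mul_nonneg hA0 hc2pos.le) (sq_nonneg _)
  have h3 : 0 ≤ A * (1 + fd n a c ^ 2) * (c3 - c2) :=
    mul_nonneg (mul_nonneg hA0 (by nlinarith [sq_nonneg (fd n a c)])) (by linarith)
  have h4 : 0 ≤ A * c3 * (hh n a (ff n a s) ^ 2 - fd n a c ^ 2) :=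
    mul_nonneg (mul_nonneg hA0 hc3pos.le) (by linarith)
  constructor
  · rw [hceq']
    nlinarith [h1, h2]
  · rw [hceq']
    nlinarith [h3, h4, h2, h1]

lemma hasDerivAt_fd_zero :
    HasDerivAt (fd n a) (((n:ℝ) - 1) * (Real.cosh a / Real.sinh a)) 0 := by
  rw [hasDerivAt_iff_tendsto_slope]
  have hmem : Ioo (-(capT' n a)) (capT' n a) ∈ 𝓝 (0:ℝ) :=
    isOpen_Ioo.mem_nhds ⟨by linarith [T_pos hn ha], T_pos hn ha⟩
  have hffc : ContinuousAt (ff n a) 0 :=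
    ff_contAt hn ha ⟨by linarith [T_pos hn ha], T_pos hn ha⟩
  have hsinh_ne : Real.sinh (ff n a 0) ≠ 0 := by
    rw [ff_zero hn ha]
    exact (Real.sinh_pos_iff.mpr ha).ne'
  have hlo : Tendsto (fun s => ((n:ℝ) - 1) * (Real.cosh (ff n a s) / Real.sinh (ff n a s)))
      (𝓝[≠] (0:ℝ)) (𝓝 (((n:ℝ) - 1) * (Real.cosh a / Real.sinh a))) := by
    have hc : ContinuousAt (fun s => ((n:ℝ) - 1) *
        (Real.cosh (ff n a s) / Real.sinh (ff n a s))) 0 := by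
      apply ContinuousAt.mul continuousAt_const
      exact ((Real.continuous_cosh.continuousAt.comp hffc).div
        (Real.continuous_sinh.continuousAt.comp hffc) hsinh_ne)
    have h2 := Tendsto.mono_left hc.tendsto (nhdsWithin_le_nhds (s := {(0:ℝ)}ᶜ))
    simpa [ff_zero hn ha] using h2
  have hhi : Tendsto (fun s => ((n:ℝ) - 1) * (Real.cosh a / Real.sinh a) *
      (1 + hh n a (ff n a s) ^ 2))
      (𝓝[≠] (0:ℝ)) (𝓝 (((n:ℝ) - 1) * (Real.cosh a / Real.sinh a))) := by
    have hc : ContinuousAt (fun s => ((n:ℝ) - 1) * (Real.cosh a / Real.sinh a) *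
        (1 + hh n a (ff n a s) ^ 2)) 0 := by
      apply ContinuousAt.mul continuousAt_const
      exact (continuousAt_const.add (((hh_cont.continuousAt.comp hffc)).pow 2))
    have h2 := Tendsto.mono_left hc.tendsto (nhdsWithin_le_nhds (s := {(0:ℝ)}ᶜ))
    simpa [ff_zero hn ha, hh_self] using h2
  apply tendsto_of_tendsto_of_tendsto_of_le_of_le' hlo hhi
  · filter_upwards [self_mem_nhdsWithin, eventually_nhdsWithin_of_eventually_nhds
      (eventually_of_mem hmem (fun s hs => hs))] with s hs0 hs
    have hsT : |s| < capT' n a := abs_lt.mpr ⟨hs.1, hs.2⟩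
    have := (slope_fd_bounds hn ha hs0 hsT).1
    rwa [slope_def_field, fd_zero_eq hn ha, sub_zero, sub_zero]
  · filter_upwards [self_mem_nhdsWithin, eventually_nhdsWithin_of_eventually_nhds
      (eventually_of_mem hmem (fun s hs => hs))] with s hs0 hs
    have hsT : |s| < capT' n a := abs_lt.mpr ⟨hs.1, hs.2⟩
    have := (slope_fd_bounds hn ha hs0 hsT).2
    rwa [slope_def_field, fd_zero_eq hn ha, sub_zero, sub_zero]

lemma ff_tendsto_top :
    Tendsto (ff n a) (𝓝[Ioo (-(capT' n a)) (capT' n a)] (capT' n a)) atTop := by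
  rw [tendsto_atTop]
  intro M
  set z := max M a + 1 with hz
  have hza : a ≤ z := by
    have := le_max_right M a; linarith
  have hGz : GG n a z < capT' n a := GG_lt_T hn ha hza
  have hGz0 : 0 ≤ GG n a z := by
    have h := GG_strictMonoOn hn ha self_mem_Ici hza (by linarith [le_max_right M a])
    rw [GG_self] at h
    exact h.le
  filter_upwards [self_mem_nhdsWithin, eventually_nhdsWithin_of_eventually_nhds
    (eventually_of_mem (Ioi_mem_nhds hGz) (fun s hs => hs))] with s hs hs2
  have hsT : |s| < capT' n a := abs_lt.mpr ⟨hs.1, hs.2⟩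
  have hzff : z < ff n a s := by
    apply lt_ff_of hn ha hsT hza
    rw [abs_of_pos (lt_of_le_of_lt hGz0 hs2)]
    exact hs2
  have := le_max_left M a
  linarith

end zerosec

end Stmt4Aux
end
end Stmt4AuxSection

/-- there is a positive, twice differentiable solution of the catenoid ODE
`f'' = (n-1) coth(f) (1 + f'^2)`, `f(0) = a`, `f'(0) = 0` on `(-T(a), T(a))`, with
`f(t) → +∞` as `t → T(a)⁻`. -/
theorem stmt_4 (n : ℕ) (hn : 2 ≤ n) (a : ℝ) (ha : 0 < a) :
    ∃ f f' : ℝ → ℝ,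
      (∀ t ∈ Set.Ioo (-(capT n a)) (capT n a), 0 < f t) ∧
      (∀ t ∈ Set.Ioo (-(capT n a)) (capT n a), HasDerivAt f (f' t) t) ∧
      (∀ t ∈ Set.Ioo (-(capT n a)) (capT n a),
        HasDerivAt f'
          (((n : ℝ) - 1) * (Real.cosh (f t) / Real.sinh (f t)) * (1 + f' t ^ 2)) t) ∧
      f 0 = a ∧ f' 0 = 0 ∧
      Filter.Tendsto f (nhdsWithin (capT n a) (Set.Ioo (-(capT n a)) (capT n a)))
        Filter.atTop := by
  have hTT : capT n a = Stmt4Aux.capT' n a := rfl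
  refine ⟨Stmt4Aux.ff n a, Stmt4Aux.fd n a, ?_, ?_, ?_, ?_, ?_, ?_⟩
  · intro t ht
    rw [hTT] at ht
    have habs : |t| < Stmt4Aux.capT' n a := abs_lt.mpr ⟨ht.1, ht.2⟩
    have := (Stmt4Aux.ff_spec hn ha habs).1
    linarith
  · intro t ht
    rw [hTT] at ht
    rcases lt_trichotomy t 0 with h0 | h0 | h0
    · rw [Stmt4Aux.fd_eq_neg hn ha h0]
      exact Stmt4Aux.ff_hasDeriv_neg hn ha ⟨ht.1, h0⟩
    · subst h0
      rw [Stmt4Aux.fd_zero_eq hn ha]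
      exact Stmt4Aux.hasDerivAt_ff_zero hn ha
    · rw [Stmt4Aux.fd_eq_pos hn ha h0]
      exact Stmt4Aux.ff_hasDeriv_pos hn ha ⟨h0, ht.2⟩
  · intro t ht
    rw [hTT] at ht
    rcases lt_trichotomy t 0 with h0 | h0 | h0
    · exact Stmt4Aux.fd_hasDeriv_neg hn ha ⟨ht.1, h0⟩
    · subst h0
      have h := Stmt4Aux.hasDerivAt_fd_zero hn ha
      have heq : ((n : ℝ) - 1) * (Real.cosh (Stmt4Aux.ff n a 0) / Real.sinh (Stmt4Aux.ff n a 0))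
          * (1 + Stmt4Aux.fd n a 0 ^ 2) = ((n:ℝ) - 1) * (Real.cosh a / Real.sinh a) := by
        rw [Stmt4Aux.ff_zero hn ha, Stmt4Aux.fd_zero_eq hn ha]
        norm_num
      rw [heq]
      exact h
    · exact Stmt4Aux.fd_hasDeriv_pos hn ha ⟨h0, ht.2⟩
  · exact Stmt4Aux.ff_zero hn ha
  · exact Stmt4Aux.fd_zero_eq hn ha
  · rw [hTT]
    exact Stmt4Aux.ff_tendsto_top hn ha
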